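/- Let m, k ≥ 1, let γ ∈ ℝ with 0 < γ ≤ 1, let H be a nonnegative m×m real matrix whose row sums are all at most 1 and whose powers H^t converge entrywise to the zero matrix, let F be an m×k real matrix, and let p_a ∈ ℝ^k. Set Q = (1−γ)·I_m + γ·H. Then the powers Q^t converge entrywise to the zero matrix, I_m − H is invertible, and for every initial vector p̃(0) ∈ ℝ^m, the iteration p̃(t+1) = γ·F·p_a + Q·p̃(t) converges to (I_m − H)^{−1}·F·p_a. -/

import Mathlib

open Filter Topology Matrix

namespace DilocAux

variable {m : ℕ}

/-- Entrywise L1 "norm" of a matrix. -/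
noncomputable def nrm (A : Matrix (Fin m) (Fin m) ℝ) : ℝ := ∑ i, ∑ j, |A i j|

lemma nrm_nonneg (A : Matrix (Fin m) (Fin m) ℝ) : 0 ≤ nrm A :=
  Finset.sum_nonneg fun _ _ => Finset.sum_nonneg fun _ _ => abs_nonneg _

lemma abs_le_nrm (A : Matrix (Fin m) (Fin m) ℝ) (i j : Fin m) : |A i j| ≤ nrm A := by
  have h1 : |A i j| ≤ ∑ j', |A i j'| :=
    Finset.single_le_sum (f := fun j' => |A i j'|) (fun _ _ => abs_nonneg _) (Finset.mem_univ j)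
  exact h1.trans (Finset.single_le_sum (f := fun i' => ∑ j', |A i' j'|)
    (fun _ _ => Finset.sum_nonneg fun _ _ => abs_nonneg _) (Finset.mem_univ i))

lemma nrm_mul_le (A B : Matrix (Fin m) (Fin m) ℝ) : nrm (A * B) ≤ nrm A * nrm B := by
  have hrow : ∀ l : Fin m, ∑ j, |B l j| ≤ nrm B := fun l =>
    Finset.single_le_sum (f := fun l' => ∑ j, |B l' j|)
      (fun _ _ => Finset.sum_nonneg fun _ _ => abs_nonneg _) (Finset.mem_univ l)
  calc nrm (A * B) = ∑ i, ∑ j, |∑ l, A i l * B l j| := by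
        simp [nrm, Matrix.mul_apply]
    _ ≤ ∑ i, ∑ j, ∑ l, |A i l| * |B l j| := by
        refine Finset.sum_le_sum fun i _ => Finset.sum_le_sum fun j _ => ?_
        exact (Finset.abs_sum_le_sum_abs _ _).trans (le_of_eq (by simp [abs_mul]))
    _ = ∑ i, ∑ l, |A i l| * ∑ j, |B l j| := by
        refine Finset.sum_congr rfl fun i _ => ?_
        rw [Finset.sum_comm]
        exact Finset.sum_congr rfl fun l _ => (Finset.mul_sum _ _ _).symm
    _ ≤ ∑ i, ∑ l, |A i l| * nrm B := by
        refine Finset.sum_le_sum fun i _ => Finset.sum_le_sum fun l _ => ?_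
        exact mul_le_mul_of_nonneg_left (hrow l) (abs_nonneg _)
    _ = nrm A * nrm B := by
        simp only [nrm, Finset.sum_mul]

lemma nrm_add_le (A B : Matrix (Fin m) (Fin m) ℝ) : nrm (A + B) ≤ nrm A + nrm B := by
  have : ∀ i, ∑ j, |(A + B) i j| ≤ (∑ j, |A i j|) + ∑ j, |B i j| := by
    intro i
    rw [← Finset.sum_add_distrib]
    exact Finset.sum_le_sum fun j _ => abs_add_le _ _
  calc nrm (A + B) ≤ ∑ i, ((∑ j, |A i j|) + ∑ j, |B i j|) :=
        Finset.sum_le_sum fun i _ => this i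
    _ = nrm A + nrm B := Finset.sum_add_distrib

lemma nrm_sum_le {ι : Type*} (S : Finset ι) (f : ι → Matrix (Fin m) (Fin m) ℝ) :
    nrm (∑ s ∈ S, f s) ≤ ∑ s ∈ S, nrm (f s) := by
  classical
  induction S using Finset.induction with
  | empty => simp [nrm]
  | insert _ _ h ih =>
    rw [Finset.sum_insert h, Finset.sum_insert h]
    exact (nrm_add_le _ _).trans (by linarith)

lemma nrm_smul (c : ℝ) (A : Matrix (Fin m) (Fin m) ℝ) : nrm (c • A) = |c| * nrm A := by
  simp [nrm, abs_mul, Finset.mul_sum]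

lemma nrm_pow_mul_le (X Y : Matrix (Fin m) (Fin m) ℝ) (q : ℕ) :
    nrm (X ^ q * Y) ≤ nrm X ^ q * nrm Y := by
  induction q with
  | zero => simp
  | succ q ih =>
    rw [pow_succ', mul_assoc]
    calc nrm (X * (X ^ q * Y)) ≤ nrm X * nrm (X ^ q * Y) := nrm_mul_le _ _
      _ ≤ nrm X * (nrm X ^ q * nrm Y) :=
          mul_le_mul_of_nonneg_left ih (nrm_nonneg _)
      _ = nrm X ^ (q + 1) * nrm Y := by ring

lemma nrm_one (hm : 1 ≤ m) : nrm (1 : Matrix (Fin m) (Fin m) ℝ) = m := by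
  simp [nrm, Matrix.one_apply, apply_ite abs]

end DilocAux

open DilocAux

/-- Attack-free convergence of the consensus-based DILOC iteration: if `H` is nonnegative
with row sums at most `1` and `H^t → 0` entrywise, `0 < γ ≤ 1`, and
`Q = (1-γ) I + γ H`, then `Q^t → 0` entrywise, `I - H` is invertible, and for every initial
vector the iteration `p̃(t+1) = γ F p_a + Q p̃(t)` converges to `(I - H)⁻¹ F p_a`. -/
theorem stmt10 {m k : ℕ} (hm : 1 ≤ m) (hk : 1 ≤ k)
    (γ : ℝ) (hγ0 : 0 < γ) (hγ1 : γ ≤ 1)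
    (H : Matrix (Fin m) (Fin m) ℝ)
    (hnonneg : ∀ i j, 0 ≤ H i j) (hrow : ∀ i, ∑ j, H i j ≤ 1)
    (hHpow : ∀ a b : Fin m, Tendsto (fun t => (H ^ t) a b) atTop (𝓝 0))
    (F : Matrix (Fin m) (Fin k) ℝ) (p_a : Fin k → ℝ)
    (Q : Matrix (Fin m) (Fin m) ℝ)
    (hQ : Q = (1 - γ) • (1 : Matrix (Fin m) (Fin m) ℝ) + γ • H) :
    (∀ a b : Fin m, Tendsto (fun t => (Q ^ t) a b) atTop (𝓝 0)) ∧
      IsUnit (1 - H) ∧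
      ∀ p : ℕ → Fin m → ℝ, (∀ t, p (t + 1) = γ • (F *ᵥ p_a) + Q *ᵥ p t) →
        ∀ i, Tendsto (fun t => p t i) atTop (𝓝 ((((1 - H)⁻¹ * F) *ᵥ p_a) i)) := by
  classical
  have h1γ : (0:ℝ) ≤ 1 - γ := by linarith
  -- nrm (H^t) → 0
  have hnrmH : Tendsto (fun t => nrm (H ^ t)) atTop (𝓝 0) := by
    have h := tendsto_finset_sum (Finset.univ : Finset (Fin m)) fun i _ =>
      tendsto_finset_sum (Finset.univ : Finset (Fin m)) fun j _ => (hHpow i j).abs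
    simpa [nrm] using h
  -- choose T with nrm (H^T) ≤ 1/2
  obtain ⟨T, hT1, hTHalf⟩ : ∃ T : ℕ, 1 ≤ T ∧ nrm (H ^ T) ≤ 1/2 := by
    obtain ⟨T, hT1, hT2⟩ :=
      ((eventually_ge_atTop 1).and
        (hnrmH.eventually_lt_const (by norm_num : (0:ℝ) < 1/2))).exists
    exact ⟨T, hT1, hT2.le⟩
  have hT0 : 0 < T := hT1
  set M : ℝ := max (m : ℝ) (max 1 (nrm H)) with hM
  have hM1 : (1:ℝ) ≤ M := le_max_of_le_right (le_max_left _ _)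
  have hM0 : (0:ℝ) ≤ M := by linarith
  have hpowM : ∀ s : ℕ, nrm (H ^ s) ≤ M ^ (s + 1) := by
    intro s
    induction s with
    | zero =>
      rw [pow_zero, nrm_one hm, pow_one]
      exact le_max_left _ _
    | succ s ih =>
      rw [pow_succ']
      calc nrm (H * H ^ s) ≤ nrm H * nrm (H ^ s) := nrm_mul_le _ _
        _ ≤ M * M ^ (s + 1) := by
            refine mul_le_mul ?_ ih (nrm_nonneg _) hM0
            exact le_max_of_le_right (le_max_right _ _)
        _ = M ^ (s + 2) := by ring
  set r : ℝ := (1/2 : ℝ) ^ ((T : ℝ)⁻¹) with hr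
  have hr0 : 0 < r := Real.rpow_pos_of_pos (by norm_num) _
  have hr1 : r < 1 := by
    refine Real.rpow_lt_one (by norm_num) (by norm_num) ?_
    positivity
  have hrT : r ^ T = 1/2 := by
    rw [hr, ← Real.rpow_natCast ((1/2 : ℝ) ^ ((T : ℝ)⁻¹)) T,
      ← Real.rpow_mul (by norm_num), inv_mul_cancel₀ (by exact_mod_cast hT0.ne'),
      Real.rpow_one]
  set C : ℝ := 2 * M ^ T with hC
  have hC0 : 0 ≤ C := by positivity
  -- key geometric bound on powers of H
  have key : ∀ j : ℕ, nrm (H ^ j) ≤ C * r ^ j := by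
    intro j
    obtain ⟨q, s, hs, hj⟩ : ∃ q s : ℕ, s < T ∧ j = T * q + s :=
      ⟨j / T, j % T, Nat.mod_lt _ hT0, (Nat.div_add_mod j T).symm⟩
    have hsplit : H ^ j = (H ^ T) ^ q * H ^ s := by
      rw [hj, pow_add, pow_mul]
    have h1 : nrm (H ^ j) ≤ nrm (H ^ T) ^ q * nrm (H ^ s) := by
      rw [hsplit]; exact nrm_pow_mul_le _ _ _
    have h2 : nrm (H ^ T) ^ q ≤ (1/2 : ℝ) ^ q :=
      pow_le_pow_left₀ (nrm_nonneg _) hTHalf q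
    have h3 : nrm (H ^ s) ≤ M ^ T := by
      calc nrm (H ^ s) ≤ M ^ (s + 1) := hpowM s
        _ ≤ M ^ T := pow_le_pow_right₀ hM1 (by omega)
    have h4 : (1/2 : ℝ) ^ q ≤ 2 * r ^ j := by
      have hrj : r ^ j = (1/2 : ℝ) ^ q * r ^ s := by
        rw [hj, pow_add, pow_mul, hrT]
      have hrs : (1/2 : ℝ) ≤ r ^ s := by
        rw [← hrT]
        exact pow_le_pow_of_le_one hr0.le hr1.le hs.le
      have hq0 : (0:ℝ) < (1/2 : ℝ) ^ q := by positivity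
      nlinarith
    calc nrm (H ^ j) ≤ nrm (H ^ T) ^ q * nrm (H ^ s) := h1
      _ ≤ (1/2 : ℝ) ^ q * M ^ T := by
          refine mul_le_mul h2 h3 (nrm_nonneg _) (by positivity)
      _ ≤ (2 * r ^ j) * M ^ T := by
          refine mul_le_mul_of_nonneg_right h4 (by positivity)
      _ = C * r ^ j := by rw [hC]; ring
  set ρ : ℝ := (1 - γ) + γ * r with hρ
  have hρ0 : 0 ≤ ρ := by positivity
  have hρ1 : ρ < 1 := by nlinarith
  -- binomial expansion of Q^n
  have hexp : ∀ n : ℕ, Q ^ n = ∑ j ∈ Finset.range (n + 1),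
      ((n.choose j : ℝ) * ((1 - γ) ^ j * γ ^ (n - j))) • H ^ (n - j) := by
    intro n
    have hc : Commute ((1 - γ) • (1 : Matrix (Fin m) (Fin m) ℝ)) (γ • H) :=
      ((Commute.one_left H).smul_left _).smul_right _
    rw [hQ, hc.add_pow]
    refine Finset.sum_congr rfl fun j hj => ?_
    have hnc : ((n.choose j : ℕ) : Matrix (Fin m) (Fin m) ℝ)
        = (n.choose j : ℝ) • (1 : Matrix (Fin m) (Fin m) ℝ) := by
      rw [← map_natCast (algebraMap ℝ (Matrix (Fin m) (Fin m) ℝ)) (n.choose j),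
        Algebra.algebraMap_eq_smul_one]
    rw [smul_pow, smul_pow, one_pow, hnc]
    simp only [smul_mul_assoc, mul_smul_comm, smul_smul, Matrix.one_mul, Matrix.mul_one]
    congr 1
    ring
  -- nrm (Q^n) ≤ C * ρ^n
  have hQn : ∀ n : ℕ, nrm (Q ^ n) ≤ C * ρ ^ n := by
    intro n
    calc nrm (Q ^ n)
        ≤ ∑ j ∈ Finset.range (n + 1),
            nrm (((n.choose j : ℝ) * ((1 - γ) ^ j * γ ^ (n - j))) • H ^ (n - j)) := by
          rw [hexp n]; exact nrm_sum_le _ _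
      _ ≤ ∑ j ∈ Finset.range (n + 1),
            C * ((1 - γ) ^ j * (γ * r) ^ (n - j) * (n.choose j : ℝ)) := by
          refine Finset.sum_le_sum fun j hj => ?_
          rw [nrm_smul]
          have hco : (0:ℝ) ≤ (n.choose j : ℝ) * ((1 - γ) ^ j * γ ^ (n - j)) := by
            exact mul_nonneg (Nat.cast_nonneg _)
              (mul_nonneg (pow_nonneg h1γ _) (pow_nonneg hγ0.le _))
          rw [abs_of_nonneg hco]
          calc (n.choose j : ℝ) * ((1 - γ) ^ j * γ ^ (n - j)) * nrm (H ^ (n - j))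
              ≤ (n.choose j : ℝ) * ((1 - γ) ^ j * γ ^ (n - j)) * (C * r ^ (n - j)) :=
                mul_le_mul_of_nonneg_left (key _) hco
            _ = C * ((1 - γ) ^ j * (γ * r) ^ (n - j) * (n.choose j : ℝ)) := by
                rw [mul_pow]; ring
      _ = C * ((1 - γ) + γ * r) ^ n := by
          rw [← Finset.mul_sum, add_pow]
      _ = C * ρ ^ n := by rw [hρ]
  have hQnrm : Tendsto (fun n => nrm (Q ^ n)) atTop (𝓝 0) := by
    refine squeeze_zero (fun n => nrm_nonneg _) hQn ?_
    simpa using (tendsto_pow_atTop_nhds_zero_of_lt_one hρ0 hρ1).const_mul C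
  -- part 1: entrywise convergence of Q^t
  have part1 : ∀ a b : Fin m, Tendsto (fun t => (Q ^ t) a b) atTop (𝓝 0) := by
    intro a b
    exact squeeze_zero_norm (fun t => by
      simpa [Real.norm_eq_abs] using abs_le_nrm (Q ^ t) a b) hQnrm
  -- part 2: 1 - H is invertible
  have hdet : (1 - H).det ≠ 0 := by
    intro hdet0
    obtain ⟨v, hv0, hv⟩ := Matrix.exists_mulVec_eq_zero_iff.mpr hdet0
    have hHv : H *ᵥ v = v := by
      rw [Matrix.sub_mulVec, Matrix.one_mulVec, sub_eq_zero] at hv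
      exact hv.symm
    have hfix : ∀ t : ℕ, (H ^ t) *ᵥ v = v := by
      intro t
      induction t with
      | zero => simp
      | succ t ih => rw [pow_succ', ← Matrix.mulVec_mulVec, ih, hHv]
    obtain ⟨i, hi⟩ := Function.ne_iff.mp hv0
    have htend : Tendsto (fun t => ((H ^ t) *ᵥ v) i) atTop (𝓝 0) := by
      have h := tendsto_finset_sum (Finset.univ : Finset (Fin m)) fun j _ =>
        (hHpow i j).mul_const (v j)
      simpa [Matrix.mulVec, dotProduct] using h
    simp only [hfix] at htend
    exact hi (tendsto_nhds_unique tendsto_const_nhds htend)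
  have hunit : IsUnit (1 - H) :=
    (Matrix.isUnit_iff_isUnit_det _).mpr (isUnit_iff_ne_zero.mpr hdet)
  refine ⟨part1, hunit, ?_⟩
  -- part 3: convergence of the iteration
  intro p hp i
  set pinf : Fin m → ℝ := ((1 - H)⁻¹ * F) *ᵥ p_a with hpinf
  have hIH : (1 - H) * (1 - H)⁻¹ = 1 :=
    Matrix.mul_nonsing_inv _ ((Matrix.isUnit_iff_isUnit_det _).mp hunit)
  have hfp : (1 - H) *ᵥ pinf = F *ᵥ p_a := by
    rw [hpinf, Matrix.mulVec_mulVec, ← Matrix.mul_assoc, hIH, Matrix.one_mul]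
  have hHpinf : H *ᵥ pinf = pinf - F *ᵥ p_a := by
    rw [Matrix.sub_mulVec, Matrix.one_mulVec] at hfp
    rw [← hfp]; abel
  have hfixp : γ • (F *ᵥ p_a) + Q *ᵥ pinf = pinf := by
    rw [hQ, Matrix.add_mulVec, Matrix.smul_mulVec, Matrix.smul_mulVec,
      Matrix.one_mulVec, hHpinf]
    funext j
    simp only [Pi.add_apply, Pi.smul_apply, Pi.sub_apply, smul_eq_mul]
    ring
  have h2 : pinf - Q *ᵥ pinf = γ • (F *ᵥ p_a) :=
    sub_eq_iff_eq_add.mpr hfixp.symm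
  have herr : ∀ t : ℕ, p t - pinf = (Q ^ t) *ᵥ (p 0 - pinf) := by
    intro t
    induction t with
    | zero => simp
    | succ t ih =>
      rw [hp t, pow_succ', ← Matrix.mulVec_mulVec, ← ih, Matrix.mulVec_sub, ← h2]
      abel
  have hK : ∀ t : ℕ, |p t i - pinf i| ≤ nrm (Q ^ t) * ∑ j, |(p 0 - pinf) j| := by
    intro t
    have h1 : p t i - pinf i = ∑ j, (Q ^ t) i j * (p 0 - pinf) j := by
      have h := congrFun (herr t) i
      simpa [Matrix.mulVec, dotProduct] using h
    rw [h1]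
    calc |∑ j, (Q ^ t) i j * (p 0 - pinf) j|
        ≤ ∑ j, |(Q ^ t) i j * (p 0 - pinf) j| := Finset.abs_sum_le_sum_abs _ _
      _ ≤ ∑ j, nrm (Q ^ t) * |(p 0 - pinf) j| := by
          refine Finset.sum_le_sum fun j _ => ?_
          rw [abs_mul]
          exact mul_le_mul_of_nonneg_right (abs_le_nrm _ _ _) (abs_nonneg _)
      _ = nrm (Q ^ t) * ∑ j, |(p 0 - pinf) j| := by rw [Finset.mul_sum]
  have htz : Tendsto (fun t => p t i - pinf i) atTop (𝓝 0) := by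
    refine squeeze_zero_norm (fun t => by
      simpa [Real.norm_eq_abs] using hK t) ?_
    simpa using hQnrm.mul_const (∑ j, |(p 0 - pinf) j|)
  exact tendsto_sub_nhds_zero_iff.mp htz
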